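/- arXiv:2002.09579 — 2 statements merged into one kernel-verified Lean document; each statement's English description precedes it below -/
import Mathlib

section
/- Let V be a real vector space, let x ∈ V, let Δ₁, …, Δ_m ∈ V, and let D be a positive natural number. Define v_i = x + D · Δ_i for i = 1, …, m, where D · Δ_i denotes scalar multiplication by the real number D. Then for every subset s ⊆ {1, …, m} with |s| ≤ D, the point x + Σ_{i∈s} Δ_i lies in the convex hull (over ℝ) of the set {x, v₁, …, v_m}. -/
/-- For dilated points `vᵢ = x + D • Δᵢ`, every point `x + Σ_{i ∈ s} Δᵢ` with
`|s| ≤ D` lies in the convex hull of `{x, v₁, …, v_m}`. -/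
theorem perturbed_point_mem_convexHull_dilated
    {V : Type*} [AddCommGroup V] [Module ℝ V]
    (x : V) {m : ℕ} (Δ : Fin m → V) (D : ℕ) (hD : 0 < D)
    (v : Fin m → V) (hv : ∀ i, v i = x + (D : ℝ) • Δ i)
    (s : Finset (Fin m)) (hs : s.card ≤ D) :
    x + ∑ i ∈ s, Δ i ∈ convexHull ℝ ({x} ∪ Set.range v) := by
  classical
  have hconv : Convex ℝ (convexHull ℝ ({x} ∪ Set.range v)) := convex_convexHull ℝ _
  have hx : x ∈ convexHull ℝ ({x} ∪ Set.range v) :=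
    subset_convexHull ℝ _ (Or.inl rfl)
  have hvi : ∀ i, v i ∈ convexHull ℝ ({x} ∪ Set.range v) :=
    fun i => subset_convexHull ℝ _ (Or.inr ⟨i, rfl⟩)
  have hD' : (0:ℝ) < D := by exact_mod_cast hD
  have hcard : (s.card : ℝ) ≤ D := by exact_mod_cast hs
  set a : ℝ := (s.card : ℝ) / D with ha
  have ha0 : 0 ≤ a := by positivity
  have ha1 : a ≤ 1 := by
    rw [ha, div_le_one hD']; exact hcard
  have key : x + ∑ i ∈ s, Δ i
      = (1 - a) • x + ∑ i ∈ s, ((1:ℝ)/D) • v i := by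
    have : ∑ i ∈ s, ((1:ℝ)/D) • v i = a • x + ∑ i ∈ s, Δ i := by
      have h1 : ∀ i ∈ s, ((1:ℝ)/D) • v i = ((1:ℝ)/D) • x + Δ i := by
        intro i _
        rw [hv i, smul_add, smul_smul]
        congr 1
        rw [one_div_mul_cancel hD'.ne', one_smul]
      rw [Finset.sum_congr rfl h1, Finset.sum_add_distrib, Finset.sum_const,
        ← Nat.cast_smul_eq_nsmul ℝ, smul_smul, ha]
      ring_nf
    rw [this, sub_smul, one_smul]
    abel
  rw [key]
  -- now use Convex.sum_mem over Option (Fin m)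
  have := hconv.sum_mem (t := insert none (s.image some))
    (w := fun o : Option (Fin m) => o.elim (1 - a) (fun _ => (1:ℝ)/D))
    (z := fun o : Option (Fin m) => o.elim x v)
    (by
      intro o ho
      rcases o with _ | i
      · simpa using sub_nonneg.mpr ha1
      · simp only [Option.elim]
        positivity)
    (by
      rw [Finset.sum_insert (by simp)]
      rw [Finset.sum_image (by intro a _ b _ h; exact Option.some.inj h)]
      simp only [Option.elim]
      rw [Finset.sum_const, nsmul_eq_mul]
      field_simp
      rw [ha]; field_simp; ring)
    (by
      intro o ho
      rcases o with _ | i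
      · exact hx
      · exact hvi i)
  rw [Finset.sum_insert (by simp),
    Finset.sum_image (by intro a _ b _ h; exact Option.some.inj h)] at this
  simpa using this
end

section
/- Let d and m be natural numbers, let x : Fin m → ℝ^d, let P be a finite set of functions Fin m → ℝ^d, and let D be a positive natural number. Suppose y : Fin m → ℝ^d is such that there exist a natural number k ≤ D, pairwise disjoint subsets B₁, …, B_k of Fin m, and elements z₁, …, z_k of P such that: for each i, z_i agrees with y on B_i and agrees with x outside B_i; and x agrees with y outside ⋃_{i=1}^k B_i. Then, viewing functions Fin m → ℝ^d as elements of the real vector space of functions Fin m → ℝ^d with pointwise operations, y lies in the convex hull (over ℝ) of the set {x} ∪ {x + D · (z − x) : z ∈ P}, where D · v denotes scalar multiplication by the real number D. -/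
/-- Soundness of the abstraction: if `y` is obtained from `x` by at most `D`
non-overlapping single-transformation edits, each single edit `zᵢ` drawn from the
set `P` of singly-perturbed samples, then `y` lies in the convex hull of `{x}`
together with the dilated points `x + D • (z - x)` for `z ∈ P`. -/
theorem abstraction_soundness
    {d m : ℕ} (x : Fin m → Fin d → ℝ)
    (P : Finset (Fin m → Fin d → ℝ)) (D : ℕ) (hD : 0 < D)
    (y : Fin m → Fin d → ℝ)
    (h : ∃ (k : ℕ), k ≤ D ∧
      ∃ (B : Fin k → Set (Fin m)) (z : Fin k → Fin m → Fin d → ℝ),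
        Pairwise (Function.onFun Disjoint B) ∧
        (∀ i, z i ∈ P) ∧
        (∀ i, ∀ j ∈ B i, z i j = y j) ∧
        (∀ i, ∀ j, j ∉ B i → z i j = x j) ∧
        (∀ j : Fin m, j ∉ ⋃ i, B i → x j = y j)) :
    y ∈ convexHull ℝ
      ({x} ∪ {w : Fin m → Fin d → ℝ | ∃ z ∈ P, w = x + (D : ℝ) • (z - x)}) := by
  obtain ⟨k, hkD, B, z, hdisj, hzP, hzy, hzx, hxy⟩ := h
  have hDpos : (0:ℝ) < D := by exact_mod_cast hD
  have hDne : (D:ℝ) ≠ 0 := ne_of_gt hDpos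
  -- key identity : y = x + ∑ (z i - x)
  have key : y = x + ∑ i : Fin k, (z i - x) := by
    funext j
    have hs : (∑ i : Fin k, (z i - x)) j = ∑ i : Fin k, (z i j - x j) := by
      simp [Finset.sum_apply]
    by_cases hj : j ∈ ⋃ i, B i
    · obtain ⟨i₀, hi₀⟩ := Set.mem_iUnion.mp hj
      have hsum : ∑ i : Fin k, (z i j - x j) = y j - x j := by
        rw [Finset.sum_eq_single i₀]
        · rw [hzy i₀ j hi₀]
        · intro i _ hne
          rw [hzx i j (fun hmem => Set.disjoint_left.mp (hdisj hne) hmem hi₀), sub_self]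
        · simp
      rw [Pi.add_apply, hs, hsum]; abel
    · have hxyj := hxy j hj
      have hz0 : ∀ i, z i j = x j :=
        fun i => hzx i j (fun hmem => hj (Set.mem_iUnion.mpr ⟨i, hmem⟩))
      simp [Pi.add_apply, hs, hz0, hxyj]
  -- convex combination
  set S : Set (Fin m → Fin d → ℝ) :=
    ({x} ∪ {w : Fin m → Fin d → ℝ | ∃ z ∈ P, w = x + (D : ℝ) • (z - x)}) with hS
  let w : Option (Fin k) → ℝ := fun o => o.elim (1 - (k:ℝ)/D) (fun _ => 1/D)
  let p : Option (Fin k) → (Fin m → Fin d → ℝ) :=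
    fun o => o.elim x (fun i => x + (D:ℝ) • (z i - x))
  have hcomb : y = ∑ o : Option (Fin k), w o • p o := by
    rw [Fintype.sum_option]
    have : ∑ i : Fin k, w (some i) • p (some i)
        = ((k:ℝ)/D) • x + ∑ i : Fin k, (z i - x) := by
      have h1 : ∀ i : Fin k, w (some i) • p (some i)
          = (1/(D:ℝ)) • x + (z i - x) := by
        intro i
        show (1/(D:ℝ)) • (x + (D:ℝ) • (z i - x)) = _
        rw [smul_add, smul_smul, one_div, inv_mul_cancel₀ hDne, one_smul]
      rw [Finset.sum_congr rfl (fun i _ => h1 i), Finset.sum_add_distrib]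
      congr 1
      rw [Finset.sum_const, Finset.card_univ, Fintype.card_fin, ← Nat.cast_smul_eq_nsmul ℝ,
        smul_smul]
      congr 1
      field_simp
    rw [this, key]
    show x + ∑ i : Fin k, (z i - x)
        = (1 - (k:ℝ)/D) • x + (((k:ℝ)/D) • x + ∑ i : Fin k, (z i - x))
    rw [← add_assoc, ← add_smul, sub_add_cancel, one_smul]
  rw [hcomb]
  refine Convex.sum_mem (convex_convexHull ℝ S) ?_ ?_ ?_
  · rintro (_ | i) _
    · show (0:ℝ) ≤ 1 - (k:ℝ)/D
      have : (k:ℝ)/D ≤ 1 := by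
        rw [div_le_one hDpos]; exact_mod_cast hkD
      linarith
    · show (0:ℝ) ≤ 1/D
      positivity
  · rw [Fintype.sum_option]
    show (1 - (k:ℝ)/D) + ∑ _i : Fin k, 1/(D:ℝ) = 1
    rw [Finset.sum_const, Finset.card_univ, Fintype.card_fin, nsmul_eq_mul]
    field_simp
    ring
  · rintro (_ | i) _
    · exact subset_convexHull ℝ S (Or.inl rfl)
    · exact subset_convexHull ℝ S (Or.inr ⟨z i, hzP i, rfl⟩)
end
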